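/- Consider the jump map θ on ordered configurations: given ranks i < j, all coordinates keep their values except the rank-i coordinate is replaced by the rank-j value, and the configuration is re-sorted. If two ordered configurations ζ, ζ̃ ∈ ℝ^N satisfy ζ[k+1] − ζ[k] ≤ ζ̃[k+1] − ζ̃[k] for all k, then after applying the same rank-based jump (i,j) to both and re-sorting, the spacing domination ζ'[k+1] − ζ'[k] ≤ ζ̃'[k+1] − ζ̃'[k] for all k is preserved. -/

import Mathlib

/-- Sort a tuple of reals in increasing order. -/
noncomputable def sortv {n : ℕ} (f : Fin n → ℝ) : Fin n → ℝ := f ∘ Tuple.sort f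

/-- The explicit sorted form of the jumped configuration. -/
noncomputable def gfun {n : ℕ} (ζ : Fin n → ℝ) (i j : Fin n) : Fin n → ℝ :=
  fun k => if h : i.val ≤ k.val ∧ k.val < j.val then ζ ⟨k.val + 1, by omega⟩ else ζ k

lemma gfun_monotone {n : ℕ} (ζ : Fin n → ℝ) (hζ : Monotone ζ) (i j : Fin n)
    (hij : i < j) : Monotone (gfun ζ i j) := by
  intro a b hab
  have hab' : a.val ≤ b.val := hab
  unfold gfun
  split_ifs with h1 h2 h2 <;>
    exact hζ (by simp only [Fin.le_def]; omega)

lemma sortv_update {n : ℕ} (ζ : Fin n → ℝ) (hζ : Monotone ζ) (i j : Fin n)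
    (hij : i < j) : sortv (Function.update ζ i (ζ j)) = gfun ζ i j := by
  have hjn : j.val < n := j.isLt
  -- the permutation
  set t : Fin n → Fin n := fun k =>
    ⟨if k.val = j.val then i.val else if i.val ≤ k.val ∧ k.val < j.val then k.val + 1
      else k.val, by split_ifs <;> omega⟩ with ht
  have tinj : Function.Injective t := by
    intro a b hab
    have := congrArg Fin.val hab
    simp only [ht] at this
    apply Fin.ext
    have hi : i.val < j.val := hij
    split_ifs at this <;> omega
  let τ : Equiv.Perm (Fin n) := Equiv.ofBijective t (Finite.injective_iff_bijective.mp tinj)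
  have hcomp : (Function.update ζ i (ζ j)) ∘ τ = gfun ζ i j := by
    funext k
    have hval : (τ k).val = if k.val = j.val then i.val
        else if i.val ≤ k.val ∧ k.val < j.val then k.val + 1 else k.val := rfl
    simp only [Function.comp_apply, gfun]
    have hi : i.val < j.val := hij
    by_cases hkj : k.val = j.val
    · have hτi : τ k = i := Fin.ext (by rw [hval]; simp [hkj])
      rw [hτi, Function.update_self, dif_neg (by omega)]
      exact congrArg ζ (Fin.ext hkj.symm)
    · by_cases hk : i.val ≤ k.val ∧ k.val < j.val
      · have hτk : τ k = (⟨k.val + 1, by omega⟩ : Fin n) :=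
          Fin.ext (by rw [hval]; simp [hkj, hk])
        rw [hτk, dif_pos hk, Function.update_of_ne (by
          intro hc
          have := congrArg Fin.val hc
          simp at this; omega)]
      · have hτk : τ k = k := Fin.ext (by rw [hval, if_neg hkj, if_neg hk])
        rw [hτk, dif_neg hk, Function.update_of_ne (by
          intro hc
          have := congrArg Fin.val hc
          omega)]
  have hmono : Monotone ((Function.update ζ i (ζ j)) ∘ τ) := by
    rw [hcomp]; exact gfun_monotone ζ hζ i j hij
  have := (Tuple.comp_sort_eq_comp_iff_monotone (f := Function.update ζ i (ζ j))
    (σ := τ)).mpr hmono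
  rw [sortv, ← this, hcomp]

/-- The rank-based jump preserves domination of spacings: if two ordered configurations
have componentwise dominated spacings, then after replacing the rank-`i` value by the
rank-`j` value (`i < j`) in both and re-sorting, the spacings are still dominated. -/
theorem stmt13 (M : ℕ) (ζ ζ' : Fin (M + 1) → ℝ)
    (hζ : Monotone ζ) (hζ' : Monotone ζ')
    (hdom : ∀ k : Fin M, ζ k.succ - ζ k.castSucc ≤ ζ' k.succ - ζ' k.castSucc)
    (i j : Fin (M + 1)) (hij : i < j) :
    ∀ k : Fin M,
      sortv (Function.update ζ i (ζ j)) k.succ -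
        sortv (Function.update ζ i (ζ j)) k.castSucc ≤
      sortv (Function.update ζ' i (ζ' j)) k.succ -
        sortv (Function.update ζ' i (ζ' j)) k.castSucc := by
  intro k
  rw [sortv_update ζ hζ i j hij, sortv_update ζ' hζ' i j hij]
  have hdom' : ∀ a : ℕ, ∀ h : a < M, ζ ⟨a + 1, by omega⟩ - ζ ⟨a, by omega⟩ ≤
      ζ' ⟨a + 1, by omega⟩ - ζ' ⟨a, by omega⟩ := by
    intro a h
    have := hdom ⟨a, h⟩
    simpa [Fin.succ, Fin.castSucc, Fin.castAdd, Fin.castLE] using this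
  have hi : i.val < j.val := hij
  have hjM : j.val < M + 1 := j.isLt
  have hk : k.val < M := k.isLt
  have hsucc : (k.succ : Fin (M + 1)).val = k.val + 1 := rfl
  have hcast : (k.castSucc : Fin (M + 1)).val = k.val := rfl
  unfold gfun
  split_ifs with h1 h2 h2
  · -- both in range: spacing ζ(k+2)-ζ(k+1)
    rw [hsucc] at h1
    have := hdom' (k.val + 1) (by omega)
    convert this using 3 <;> simp [hsucc, hcast]
  · -- succ in range, castSucc not: i = k+1
    rw [hsucc] at h1
    rw [hcast] at h2
    have hik : i.val = k.val + 1 := by omega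
    have e1 := hdom' k.val (by omega)
    have e2 := hdom' (k.val + 1) (by omega)
    have : ζ ⟨k.val + 1 + 1, by omega⟩ - ζ ⟨k.val, by omega⟩ ≤
        ζ' ⟨k.val + 1 + 1, by omega⟩ - ζ' ⟨k.val, by omega⟩ := by linarith
    convert this using 3 <;> (apply Fin.ext; simp [hsucc, hcast])
  · -- castSucc in range, succ not: k+1 = j, both sides zero
    rw [hsucc] at h1
    rw [hcast] at h2
    have hkj : k.val + 1 = j.val := by omega
    have ej : (⟨(k.castSucc : Fin (M + 1)).val + 1, by omega⟩ : Fin (M + 1)) = j :=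
      Fin.ext (by simp only [Fin.val_mk]; omega)
    have ejs : (k.succ : Fin (M + 1)) = j := Fin.ext (by omega)
    rw [ejs, ej]
    simp
  · -- neither in range
    rw [hsucc] at h1
    rw [hcast] at h2
    have := hdom' k.val hk
    convert this using 3 <;> (apply Fin.ext; simp [hsucc, hcast])
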